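/- Assume γ = t_m. Let e_1, …, e_n be the standard basis of ℂⁿ and define ẽ_j = (i e_j + e_{n+1−j})/√2 for j = 1, …, m. Then ẽ_1, …, ẽ_m are orthonormal, and H ẽ_1 = Re(z_1) ẽ_1 + t_1 ẽ_2, H ẽ_j = t_{j−1} ẽ_{j−1} + Re(z_j) ẽ_j + t_j ẽ_{j+1} for 2 ≤ j ≤ m−1, and H ẽ_m = t_{m−1} ẽ_{m−1} + Δ ẽ_m. Consequently the span K of ẽ_1, …, ẽ_m is an invariant subspace of H, and the matrix of the restriction of H to K in the basis (ẽ_1, …, ẽ_m) is the real symmetric tridiagonal matrix with diagonal entries (Re z_1, …, Re z_{m−1}, Δ) and off-diagonal entries t_1, …, t_{m−1}. -/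
import Mathlib


open Matrix Complex

/-- The `2m × 2m` tridiagonal Hamiltonian with diagonal entries `z 1, …, z n`
(1-based) and symmetric off-diagonal entries `t 1, …, t (n-1)`. -/
noncomputable def Hop (m : ℕ) (t : ℕ → ℝ) (z : ℕ → ℂ) :
    Matrix (Fin (2*m)) (Fin (2*m)) ℂ :=
  fun i j =>
    if (i : ℕ) = (j : ℕ) then z ((i : ℕ) + 1)
    else if (i : ℕ) + 1 = (j : ℕ) then ((t ((i : ℕ) + 1) : ℝ) : ℂ)
    else if (j : ℕ) + 1 = (i : ℕ) then ((t ((j : ℕ) + 1) : ℝ) : ℂ)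
    else 0

/-- The block matrix `M(Z) = [[1, (conj Z / t_m) P_m],[(Z / t_m) P_m, 1]]`. -/
noncomputable def Mop (m : ℕ) (t : ℕ → ℝ) (Z : ℂ) :
    Matrix (Fin (2*m)) (Fin (2*m)) ℂ :=
  fun i j =>
    if i = j then 1
    else if (i : ℕ) + (j : ℕ) + 1 = 2*m then
      (if (i : ℕ) < m then (starRingEnd ℂ) Z / (t m : ℂ) else Z / (t m : ℂ))
    else 0

/-- The vectors `ẽ_j = (i e_j + e_{n+1−j})/√2`, `j = 1, …, m` (0-based index). -/
noncomputable def etil (m : ℕ) (j : Fin m) : Fin (2*m) → ℂ :=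
  fun k =>
    (Complex.I * (if (k : ℕ) = (j : ℕ) then 1 else 0) +
      (if (k : ℕ) + (j : ℕ) + 1 = 2*m then 1 else 0)) / ((Real.sqrt 2 : ℝ) : ℂ)

/-- The real symmetric tridiagonal matrix with diagonal
`(Re z_1, …, Re z_{m−1}, Δ)` and off-diagonal entries `t_1, …, t_{m−1}`. -/
noncomputable def Ttri (m : ℕ) (t : ℕ → ℝ) (z : ℕ → ℂ) : Matrix (Fin m) (Fin m) ℝ :=
  fun i j =>
    if (i : ℕ) = (j : ℕ) then (z ((i : ℕ) + 1)).re
    else if (i : ℕ) + 1 = (j : ℕ) then t ((i : ℕ) + 1)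
    else if (j : ℕ) + 1 = (i : ℕ) then t ((j : ℕ) + 1)
    else 0



noncomputable def Hn (t : ℕ → ℝ) (z : ℕ → ℂ) (a b : ℕ) : ℂ :=
  if a = b then z (a + 1)
  else if a + 1 = b then ((t (a+1) : ℝ) : ℂ)
  else if b + 1 = a then ((t (b+1) : ℝ) : ℂ)
  else 0

noncomputable def Tn (t : ℕ → ℝ) (z : ℕ → ℂ) (a b : ℕ) : ℝ :=
  if a = b then (z (a + 1)).re
  else if a + 1 = b then t (a+1)
  else if b + 1 = a then t (b+1)
  else 0

lemma sum_ind {W : Type*} [AddCommMonoid W] (m c : ℕ) (F : Fin m → W) :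
    ∑ k : Fin m, (if (k : ℕ) = c then F k else 0) = if h : c < m then F ⟨c, h⟩ else 0 := by
  split
  · next h =>
    rw [Finset.sum_eq_single (⟨c, h⟩ : Fin m)]
    · simp
    · intro b _ hb
      rw [if_neg]
      intro hbc
      exact hb (Fin.ext hbc)
    · intro h'; exact absurd (Finset.mem_univ _) h'
  · next h =>
    apply Finset.sum_eq_zero
    intro k _
    rw [if_neg]
    have := k.isLt
    omega

lemma sqrt2_sq : ((Real.sqrt 2 : ℝ) : ℂ) * ((Real.sqrt 2 : ℝ) : ℂ) = 2 := by
  norm_cast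
  rw [Real.mul_self_sqrt] <;> norm_num

lemma prod_formula (x y u v : ℂ) :
    star ((Complex.I * x + y) / ((Real.sqrt 2 : ℝ) : ℂ)) *
      ((Complex.I * u + v) / ((Real.sqrt 2 : ℝ) : ℂ))
    = ((star x) * u + (star y) * v) / 2 + Complex.I * ((star y) * u - (star x) * v) / 2 := by
  simp only [star_div₀, star_add, star_mul', Complex.star_def, Complex.conj_I,
    Complex.conj_ofReal]
  rw [div_mul_div_comm, sqrt2_sq]
  linear_combination (-((starRingEnd ℂ) x * u) * Complex.I_mul_I) / 2

lemma Sval (n c1 c2 : ℕ) (h : c1 < n) :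
    ∑ p : Fin n, (if (p:ℕ) = c1 then (1:ℂ) else 0) * (if (p:ℕ) = c2 then (1:ℂ) else 0)
    = if c1 = c2 then 1 else 0 := by
  simp only [ite_mul, one_mul, zero_mul]
  rw [sum_ind, dif_pos h]

lemma ortho (m : ℕ) (j k : Fin m) :
    star (etil m j) ⬝ᵥ etil m k = if j = k then 1 else 0 := by
  have hj := j.isLt
  have hk := k.isLt
  have step : ∀ p : Fin (2*m), star (etil m j) p * etil m k p
      = (((if (p:ℕ) = (j:ℕ) then (1:ℂ) else 0) * (if (p:ℕ) = (k:ℕ) then (1:ℂ) else 0))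
        + ((if (p:ℕ) = 2*m-1-(j:ℕ) then (1:ℂ) else 0) * (if (p:ℕ) = 2*m-1-(k:ℕ) then (1:ℂ) else 0))) / 2
      + Complex.I * (((if (p:ℕ) = 2*m-1-(j:ℕ) then (1:ℂ) else 0) * (if (p:ℕ) = (k:ℕ) then (1:ℂ) else 0))
        - ((if (p:ℕ) = (j:ℕ) then (1:ℂ) else 0) * (if (p:ℕ) = 2*m-1-(k:ℕ) then (1:ℂ) else 0))) / 2 := by
    intro p
    have hp := p.isLt
    simp only [etil, Pi.star_apply]
    rw [if_congr (show (p:ℕ)+(j:ℕ)+1 = 2*m ↔ (p:ℕ) = 2*m-1-(j:ℕ) by omega) rfl rfl,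
      if_congr (show (p:ℕ)+(k:ℕ)+1 = 2*m ↔ (p:ℕ) = 2*m-1-(k:ℕ) by omega) rfl rfl,
      prod_formula]
    simp only [apply_ite (star : ℂ → ℂ), star_one, star_zero]
  rw [dotProduct]
  simp only [step]
  rw [Finset.sum_add_distrib, ← Finset.sum_div, ← Finset.sum_div, ← Finset.mul_sum,
    Finset.sum_add_distrib, Finset.sum_sub_distrib, Sval _ _ _ (by omega), Sval _ _ _ (by omega),
    Sval _ _ _ (by omega), Sval _ _ _ (by omega)]
  rw [if_neg (show ¬(2*m-1-(j:ℕ) = (k:ℕ)) by omega),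
    if_neg (show ¬((j:ℕ) = 2*m-1-(k:ℕ)) by omega),
    if_congr (show (j:ℕ) = (k:ℕ) ↔ j = k from ⟨Fin.ext, congrArg _⟩) rfl rfl,
    if_congr (show 2*m-1-(j:ℕ) = 2*m-1-(k:ℕ) ↔ j = k from
      ⟨fun h => Fin.ext (by omega), fun h => by rw [h]⟩) rfl rfl]
  split <;> norm_num

lemma mulVec_etil (m : ℕ) (t : ℕ → ℝ) (z : ℕ → ℂ) (j : Fin m) (i : Fin (2*m)) :
    (Hop m t z).mulVec (etil m j) i
    = (Complex.I * Hn t z i j + Hn t z i (2*m-1-(j:ℕ))) / ((Real.sqrt 2 : ℝ) : ℂ) := by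
  have hj : (j:ℕ) < 2*m := by have := j.isLt; omega
  have hj2 : 2*m-1-(j:ℕ) < 2*m := by omega
  have step : ∀ k : Fin (2*m), Hop m t z i k * etil m j k
      = (Complex.I * (if (k:ℕ) = (j:ℕ) then Hn t z i k else 0)
        + (if (k:ℕ) = 2*m-1-(j:ℕ) then Hn t z i k else 0)) / ((Real.sqrt 2:ℝ):ℂ) := by
    intro k
    have hk := k.isLt
    have hHop : Hop m t z i k = Hn t z (i:ℕ) (k:ℕ) := rfl
    simp only [etil, hHop]
    rw [if_congr (show ((k:ℕ) + (j:ℕ) + 1 = 2*m) ↔ ((k:ℕ) = 2*m - 1 - (j:ℕ)) by omega) rfl rfl]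
    split_ifs <;> ring
  rw [Matrix.mulVec, dotProduct]
  simp only [step]
  rw [← Finset.sum_div, Finset.sum_add_distrib, ← Finset.mul_sum, sum_ind, sum_ind,
    dif_pos hj, dif_pos hj2]

lemma rhs_etil (m : ℕ) (t : ℕ → ℝ) (z : ℕ → ℂ) (j : Fin m) (i : Fin (2*m)) :
    (∑ k : Fin m, ((Ttri m t z j k : ℝ) : ℂ) • etil m k) i
    = (Complex.I * (if (i:ℕ) < m then ((Tn t z j i : ℝ):ℂ) else 0)
      + (if m ≤ (i:ℕ) then ((Tn t z j (2*m-1-(i:ℕ)) : ℝ):ℂ) else 0)) / ((Real.sqrt 2:ℝ):ℂ) := by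
  have hi := i.isLt
  have step : ∀ k : Fin m, (((Ttri m t z j k : ℝ):ℂ) • etil m k) i
      = (Complex.I * (if (k:ℕ) = (i:ℕ) then ((Tn t z j k : ℝ):ℂ) else 0)
        + (if (k:ℕ) = 2*m-1-(i:ℕ) then ((Tn t z j k : ℝ):ℂ) else 0)) / ((Real.sqrt 2:ℝ):ℂ) := by
    intro k
    have hk := k.isLt
    have hT : Ttri m t z j k = Tn t z (j:ℕ) (k:ℕ) := rfl
    simp only [etil, hT, Pi.smul_apply, smul_eq_mul]
    rw [if_congr (show ((i:ℕ) = (k:ℕ)) ↔ ((k:ℕ) = (i:ℕ)) from eq_comm) rfl rfl,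
      if_congr (show ((i:ℕ) + (k:ℕ) + 1 = 2*m) ↔ ((k:ℕ) = 2*m - 1 - (i:ℕ)) by omega) rfl rfl]
    split_ifs <;> ring
  rw [Finset.sum_apply]
  simp only [step]
  rw [← Finset.sum_div, Finset.sum_add_distrib, ← Finset.mul_sum, sum_ind, sum_ind]
  rcases lt_or_ge (i:ℕ) m with h | h
  · rw [dif_pos h, dif_neg (by omega), if_pos h, if_neg (by omega)]
  · rw [dif_neg (by omega), dif_pos (show 2*m-1-(i:ℕ) < m by omega), if_neg (by omega), if_pos h]

lemma num (m : ℕ) (hm : 1 ≤ m) (t : ℕ → ℝ) (z : ℕ → ℂ)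
    (htsym : ∀ j, 1 ≤ j → j ≤ 2*m - 1 → t j = t (2*m - j))
    (hzreal : ∀ j, 1 ≤ j → j ≤ 2*m → j ≠ m → j ≠ m + 1 → (z j).im = 0)
    (hzsym : ∀ j, 1 ≤ j → j ≤ 2*m → z (2*m + 1 - j) = (starRingEnd ℂ) (z j))
    (hγ_eq : (z m).im = t m)
    (i a : ℕ) (hi : i < 2*m) (ha : a < m) :
    Complex.I * Hn t z i a + Hn t z i (2*m-1-a)
    = Complex.I * (if i < m then ((Tn t z a i : ℝ) : ℂ) else 0)
      + (if m ≤ i then ((Tn t z a (2*m-1-i) : ℝ) : ℂ) else 0) := by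
  have hre : ∀ k, 1 ≤ k → k ≤ 2*m → k ≠ m → k ≠ m+1 → z k = ((z k).re : ℂ) := by
    intro k h1 h2 h3 h4
    have := hzreal k h1 h2 h3 h4
    exact Complex.ext (by simp) (by simp [this])
  have hzm : z m = ((z m).re : ℂ) + (t m : ℂ) * Complex.I := by
    rw [← hγ_eq]
    exact (Complex.re_add_im (z m)).symm
  have hzmc : (starRingEnd ℂ) (z m) = ((z m).re : ℂ) - (t m : ℂ) * Complex.I := by
    have key : ∀ (r s : ℝ), (starRingEnd ℂ) ((r:ℂ) + (s:ℂ) * Complex.I)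
        = (r:ℂ) - (s:ℂ) * Complex.I := by
      intro r s
      rw [RingHom.map_add, RingHom.map_mul, Complex.conj_I, Complex.conj_ofReal,
        Complex.conj_ofReal]
      ring
    calc (starRingEnd ℂ) (z m)
        = (starRingEnd ℂ) (((z m).re:ℂ) + (t m:ℂ) * Complex.I) := by rw [← hzm]
      _ = _ := key _ _
  by_cases him : i < m
  · rw [if_pos him, if_neg (by omega), add_zero]
    by_cases h1 : i = a
    · subst h1
      by_cases h2 : i = m - 1
      · have e1 : Hn t z i i = z (i+1) := by simp [Hn]
        have e2 : Hn t z i (2*m-1-i) = ((t (i+1) : ℝ) : ℂ) := by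
          simp only [Hn]; rw [if_neg (by omega), if_pos (by omega)]
        have e3 : Tn t z i i = (z (i+1)).re := by simp [Tn]
        rw [e1, e2, e3]
        rw [show i + 1 = m by omega]
        linear_combination Complex.I * hzm + (t m : ℂ) * Complex.I_mul_I
      · have e1 : Hn t z i i = z (i+1) := by simp [Hn]
        have e2 : Hn t z i (2*m-1-i) = 0 := by
          simp only [Hn]; rw [if_neg (by omega), if_neg (by omega), if_neg (by omega)]
        have e3 : Tn t z i i = (z (i+1)).re := by simp [Tn]
        rw [e1, e2, e3, add_zero, hre (i+1) (by omega) (by omega) (by omega) (by omega)]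
        simp
    · by_cases h2 : i + 1 = a
      · have e1 : Hn t z i a = ((t (i+1) : ℝ) : ℂ) := by
          simp only [Hn]; rw [if_neg h1, if_pos h2]
        have e2 : Hn t z i (2*m-1-a) = 0 := by
          simp only [Hn]; rw [if_neg (by omega), if_neg (by omega), if_neg (by omega)]
        have e3 : Tn t z a i = t (i+1) := by
          simp only [Tn]; rw [if_neg (by omega), if_neg (by omega), if_pos (by omega)]
        rw [e1, e2, e3, add_zero]
      · by_cases h3 : a + 1 = i
        · have e1 : Hn t z i a = ((t (a+1) : ℝ) : ℂ) := by
            simp only [Hn]; rw [if_neg h1, if_neg (by omega), if_pos h3]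
          have e2 : Hn t z i (2*m-1-a) = 0 := by
            simp only [Hn]; rw [if_neg (by omega), if_neg (by omega), if_neg (by omega)]
          have e3 : Tn t z a i = t (a+1) := by
            simp only [Tn]; rw [if_neg (by omega), if_pos (by omega)]
          rw [e1, e2, e3, add_zero]
        · have e1 : Hn t z i a = 0 := by
            simp only [Hn]; rw [if_neg h1, if_neg h2, if_neg (by omega)]
          have e2 : Hn t z i (2*m-1-a) = 0 := by
            simp only [Hn]; rw [if_neg (by omega), if_neg (by omega), if_neg (by omega)]
          have e3 : Tn t z a i = 0 := by
            simp only [Tn]; rw [if_neg (by omega), if_neg (by omega), if_neg (by omega)]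
          rw [e1, e2, e3]
          simp
  · rw [if_neg him, if_pos (by omega), mul_zero, zero_add]
    by_cases h1 : i = 2*m-1-a
    · by_cases h2 : a = m-1
      · have hi' : i = m := by omega
        have e1 : Hn t z i a = ((t (a+1) : ℝ) : ℂ) := by
          simp only [Hn]; rw [if_neg (by omega), if_neg (by omega), if_pos (by omega)]
        have e2 : Hn t z i (2*m-1-a) = z (i+1) := by
          simp only [Hn]; rw [if_pos (by omega)]
        have e3 : Tn t z a (2*m-1-i) = (z (a+1)).re := by
          simp only [Tn]; rw [if_pos (by omega)]
        rw [e1, e2, e3]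
        rw [show a + 1 = m by omega, show i + 1 = m + 1 by omega]
        have hzc : z (m+1) = ((z m).re : ℂ) - (t m : ℂ) * Complex.I := by
          have h := hzsym m (by omega) (by omega)
          rw [show 2*m+1-m = m+1 by omega] at h
          rw [h, hzmc]
        linear_combination hzc
      · have e1 : Hn t z i a = 0 := by
          simp only [Hn]; rw [if_neg (by omega), if_neg (by omega), if_neg (by omega)]
        have e2 : Hn t z i (2*m-1-a) = z (i+1) := by
          simp only [Hn]; rw [if_pos (by omega)]
        have e3 : Tn t z a (2*m-1-i) = (z (a+1)).re := by
          simp only [Tn]; rw [if_pos (by omega)]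
        rw [e1, e2, e3]
        have hzc : z (i+1) = (starRingEnd ℂ) (z (a+1)) := by
          have h := hzsym (a+1) (by omega) (by omega)
          rw [show 2*m+1-(a+1) = i+1 by omega] at h
          exact h
        rw [hzc, hre (a+1) (by omega) (by omega) (by omega) (by omega), Complex.conj_ofReal]
        simp
    · by_cases h2 : i = 2*m-a
      · have ha1 : 1 ≤ a := by omega
        have e1 : Hn t z i a = 0 := by
          simp only [Hn]; rw [if_neg (by omega), if_neg (by omega), if_neg (by omega)]
        have e2 : Hn t z i (2*m-1-a) = ((t (2*m-a) : ℝ) : ℂ) := by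
          simp only [Hn]; rw [if_neg (by omega), if_neg (by omega), if_pos (by omega)]
          rw [show 2*m-1-a+1 = 2*m-a by omega]
        have e3 : Tn t z a (2*m-1-i) = t a := by
          simp only [Tn]; rw [if_neg (by omega), if_neg (by omega), if_pos (by omega)]
          rw [show 2*m-1-i+1 = a by omega]
        rw [e1, e2, e3]
        rw [show t (2*m-a) = t a from (htsym a (by omega) (by omega)).symm]
        ring
      · by_cases h3 : i = 2*m-2-a
        · have e1 : Hn t z i a = 0 := by
            simp only [Hn]; rw [if_neg (by omega), if_neg (by omega), if_neg (by omega)]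
          have e2 : Hn t z i (2*m-1-a) = ((t (i+1) : ℝ) : ℂ) := by
            simp only [Hn]; rw [if_neg (by omega), if_pos (by omega)]
          have e3 : Tn t z a (2*m-1-i) = t (a+1) := by
            simp only [Tn]; rw [if_neg (by omega), if_pos (by omega)]
          rw [e1, e2, e3]
          rw [show i + 1 = 2*m-(a+1) by omega,
            show t (2*m-(a+1)) = t (a+1) from (htsym (a+1) (by omega) (by omega)).symm]
          ring
        · have e1 : Hn t z i a = 0 := by
            simp only [Hn]; rw [if_neg (by omega), if_neg (by omega), if_neg (by omega)]
          have e2 : Hn t z i (2*m-1-a) = 0 := by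
            simp only [Hn]; rw [if_neg (by omega), if_neg (by omega), if_neg (by omega)]
          have e3 : Tn t z a (2*m-1-i) = 0 := by
            simp only [Tn]; rw [if_neg (by omega), if_neg (by omega), if_neg (by omega)]
          rw [e1, e2, e3]
          simp

lemma row_eval (m : ℕ) (t : ℕ → ℝ) (z : ℕ → ℂ) (a : ℕ) (ha : a < m) :
    ∑ k : Fin m, ((Ttri m t z ⟨a, ha⟩ k : ℝ) : ℂ) • etil m k
    = (((z (a+1)).re : ℝ) : ℂ) • etil m ⟨a, ha⟩
      + (if h : a+1 < m then ((t (a+1) : ℝ) : ℂ) • etil m ⟨a+1, h⟩ else 0)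
      + (if h : 1 ≤ a then ((t a : ℝ) : ℂ) • etil m ⟨a-1, by omega⟩ else 0) := by
  have step : ∀ k : Fin m, ((Ttri m t z ⟨a, ha⟩ k : ℝ) : ℂ) • etil m k
      = (if (k:ℕ) = a then (((z (a+1)).re : ℝ) : ℂ) • etil m k else 0)
        + (if (k:ℕ) = a+1 then ((t (a+1) : ℝ) : ℂ) • etil m k else 0)
        + (if (k:ℕ)+1 = a then ((t a : ℝ) : ℂ) • etil m k else 0) := by
    intro k
    have hk := k.isLt
    have hT : Ttri m t z ⟨a, ha⟩ k
        = (if a = (k:ℕ) then (z (a+1)).re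
          else if a + 1 = (k:ℕ) then t (a+1)
          else if (k:ℕ) + 1 = a then t ((k:ℕ)+1) else 0) := rfl
    rw [hT]
    by_cases c1 : (k:ℕ) = a
    · rw [if_pos c1.symm, if_pos c1, if_neg (show ¬((k:ℕ) = a+1) by omega),
        if_neg (show ¬((k:ℕ)+1 = a) by omega)]
      simp
    · by_cases c2 : (k:ℕ) = a+1
      · rw [if_neg (show ¬(a = (k:ℕ)) by omega), if_pos c2.symm, if_neg c1, if_pos c2,
          if_neg (show ¬((k:ℕ)+1 = a) by omega)]
        simp
      · by_cases c3 : (k:ℕ)+1 = a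
        · rw [if_neg (show ¬(a = (k:ℕ)) by omega), if_neg (show ¬(a+1 = (k:ℕ)) by omega),
            if_pos c3, if_neg c1, if_neg c2, if_pos c3, c3]
          simp
        · rw [if_neg (show ¬(a = (k:ℕ)) by omega), if_neg (show ¬(a+1 = (k:ℕ)) by omega),
            if_neg c3, if_neg c1, if_neg c2, if_neg c3]
          simp
  rw [Finset.sum_congr rfl (fun k _ => step k), Finset.sum_add_distrib,
    Finset.sum_add_distrib, sum_ind, sum_ind, dif_pos ha]
  congr 1
  by_cases ha1 : 1 ≤ a
  · rw [show (∑ x : Fin m, if (x:ℕ)+1 = a then ((t a : ℝ):ℂ) • etil m x else 0)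
        = ∑ x : Fin m, if (x:ℕ) = a-1 then ((t a : ℝ):ℂ) • etil m x else 0 from
        Finset.sum_congr rfl (fun k _ => if_congr (by omega) rfl rfl),
      sum_ind, dif_pos (show a-1 < m by omega), dif_pos ha1]
  · rw [dif_neg ha1, Finset.sum_eq_zero]
    intro k _
    rw [if_neg (by omega)]

theorem stmt9 (m : ℕ) (hm : 1 ≤ m) (t : ℕ → ℝ) (z : ℕ → ℂ)
    (ht0 : ∀ j, 1 ≤ j → j ≤ 2*m - 1 → t j ≠ 0)
    (htsym : ∀ j, 1 ≤ j → j ≤ 2*m - 1 → t j = t (2*m - j))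
    (htm : 0 < t m)
    (hzreal : ∀ j, 1 ≤ j → j ≤ 2*m → j ≠ m → j ≠ m + 1 → (z j).im = 0)
    (hzsym : ∀ j, 1 ≤ j → j ≤ 2*m → z (2*m + 1 - j) = (starRingEnd ℂ) (z j))
    (hγ : 0 ≤ (z m).im)
    (hγ_eq : (z m).im = t m) :
    (∀ j k : Fin m, star (etil m j) ⬝ᵥ etil m k = if j = k then 1 else 0) ∧
    (∀ _h2 : 2 ≤ m,
      (Hop m t z).mulVec (etil m ⟨0, by omega⟩) =
        (((z 1).re : ℝ) : ℂ) • etil m ⟨0, by omega⟩ + ((t 1 : ℝ) : ℂ) • etil m ⟨1, by omega⟩) ∧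
    (∀ j : ℕ, ∀ (_hj1 : 2 ≤ j) (_hj2 : j ≤ m - 1),
      (Hop m t z).mulVec (etil m ⟨j - 1, by omega⟩) =
        ((t (j - 1) : ℝ) : ℂ) • etil m ⟨j - 2, by omega⟩ +
          (((z j).re : ℝ) : ℂ) • etil m ⟨j - 1, by omega⟩ +
          ((t j : ℝ) : ℂ) • etil m ⟨j, by omega⟩) ∧
    (∀ _h2 : 2 ≤ m,
      (Hop m t z).mulVec (etil m ⟨m - 1, by omega⟩) =
        ((t (m - 1) : ℝ) : ℂ) • etil m ⟨m - 2, by omega⟩ +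
          (((z m).re : ℝ) : ℂ) • etil m ⟨m - 1, by omega⟩) ∧
    (∀ j : Fin m, (Hop m t z).mulVec (etil m j) =
      ∑ k : Fin m, ((Ttri m t z j k : ℝ) : ℂ) • etil m k) ∧
    (∀ v ∈ Submodule.span ℂ (Set.range (etil m)),
      (Hop m t z).mulVec v ∈ Submodule.span ℂ (Set.range (etil m)))  := by
  have master : ∀ j : Fin m, (Hop m t z).mulVec (etil m j)
      = ∑ k : Fin m, ((Ttri m t z j k : ℝ) : ℂ) • etil m k := by
    intro j
    funext i
    rw [mulVec_etil, rhs_etil]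
    congr 1
    exact num m hm t z htsym hzreal hzsym hγ_eq i j i.isLt j.isLt
  have E : ∀ (a b : ℕ) (h1 : a < m) (h2 : b < m), a = b →
      etil m ⟨a, h1⟩ = etil m ⟨b, h2⟩ := by
    intro a b h1 h2 h; subst h; rfl
  refine ⟨ortho m, ?_, ?_, ?_, master, ?_⟩
  · intro h2
    rw [master, row_eval m t z 0 (by omega), dif_pos (show 0+1 < m by omega),
      dif_neg (by norm_num), add_zero]
  · intro j hj1 hj2
    rw [master, row_eval m t z (j-1) (by omega),
      dif_pos (show j-1+1 < m by omega), dif_pos (show 1 ≤ j-1 by omega),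
      E (j-1+1) j (by omega) (by omega) (by omega),
      E (j-1-1) (j-2) (by omega) (by omega) (by omega),
      show j-1+1 = j from by omega]
    funext x
    simp only [Pi.add_apply, Pi.smul_apply, smul_eq_mul]
    ring
  · intro h2
    rw [master, row_eval m t z (m-1) (by omega), dif_neg (show ¬(m-1+1 < m) by omega),
      add_zero, dif_pos (show 1 ≤ m-1 by omega),
      E (m-1-1) (m-2) (by omega) (by omega) (by omega),
      show m-1+1 = m from by omega]
    funext x
    simp only [Pi.add_apply, Pi.smul_apply, smul_eq_mul]
    ring
  · intro v hv
    induction hv using Submodule.span_induction with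
    | mem x hx =>
        obtain ⟨j, rfl⟩ := hx
        rw [master j]
        exact Submodule.sum_mem _ fun k _ =>
          Submodule.smul_mem _ _ (Submodule.subset_span ⟨k, rfl⟩)
    | zero => rw [Matrix.mulVec_zero]; exact Submodule.zero_mem _
    | add x y _ _ hx hy => rw [Matrix.mulVec_add]; exact Submodule.add_mem _ hx hy
    | smul c x _ hx => rw [Matrix.mulVec_smul]; exact Submodule.smul_mem _ _ hx
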